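/- Let L be a complete chain (a linearly ordered complete lattice). Then L is an algebraic lattice if and only if below every element p ∈ L with p not the smallest element, the set of successor elements ≤ p is cofinal from below in the sense that p = sup of the successors and bottom elements ≤ p; equivalently, the compact elements of L are exactly the successors and the smallest element, and L is algebraic iff every element is a supremum of successors and the bottom element below it. -/

import Mathlib

/-- `k` is a successor in a chain: there is `q < k` with nothing strictly between. -/
def IsSuccessorElt {L : Type*} [CompleteLinearOrder L] (k : L) : Prop :=
  ∃ q, q < k ∧ ∀ r, q < r → r ≤ k → r = k

theorem compact_iff_aux {L : Type*} [CompleteLinearOrder L] (k : L) :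
    IsCompactElement k ↔ (k = ⊥ ∨ IsSuccessorElt k) := by
  constructor
  · intro hk
    rcases eq_or_ne k ⊥ with h | h
    · exact Or.inl h
    right
    set q := sSup {x | x < k} with hq
    have hqle : q ≤ k := sSup_le fun x hx => hx.le
    have hqk : q < k := by
      rcases lt_or_eq_of_le hqle with h' | h'
      · exact h'
      · exfalso
        obtain ⟨F, hF, hle⟩ := (CompleteLattice.isCompactElement_iff_exists_le_sSup_of_le_sSup (k := k) |>.1 hk) {x | x < k} (by rw [← hq, h'])
        have hlt : F.sup id < k :=
          Finset.sup_lt_iff (bot_lt_iff_ne_bot.2 h) |>.2 fun x hx => hF hx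
        exact absurd hle (not_le.2 hlt)
    refine ⟨q, hqk, fun r hr hrk => ?_⟩
    rcases lt_or_eq_of_le hrk with h' | h'
    · exact absurd (le_sSup (show r ∈ {x | x < k} from h')) (not_le.2 hr)
    · exact h'
  · rw [CompleteLattice.isCompactElement_iff_exists_le_sSup_of_le_sSup]; rintro (rfl | ⟨q, hq, hsucc⟩)
    · intro s _
      exact ⟨∅, by simp, by simp⟩
    · intro s hs
      by_cases hx : ∃ x ∈ s, k ≤ x
      · obtain ⟨x, hxs, hkx⟩ := hx
        exact ⟨{x}, by simpa using hxs, by simpa using hkx⟩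
      · exfalso
        push_neg at hx
        have : sSup s ≤ q := sSup_le fun x hxs => by
          rcases le_or_gt x q with h' | h'
          · exact h'
          · exact absurd ((hsucc x h' (hx x hxs).le) ▸ le_refl k) (not_le.2 (hx x hxs))
        exact absurd (hs.trans this) (not_le.2 hq)

theorem stmt_16 {L : Type*} [CompleteLinearOrder L] :
    (∀ k : L, IsCompactElement k ↔ (k = ⊥ ∨ IsSuccessorElt k)) ∧
    ((∀ p : L, p = sSup {k | k ≤ p ∧ IsCompactElement k}) ↔
      (∀ p : L, p = sSup {k | k ≤ p ∧ (k = ⊥ ∨ IsSuccessorElt k)})) := by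
  refine ⟨compact_iff_aux, ?_⟩
  have hset : ∀ p : L, {k | k ≤ p ∧ IsCompactElement k} =
      {k | k ≤ p ∧ (k = ⊥ ∨ IsSuccessorElt k)} := fun p => by
    ext k; simp [compact_iff_aux]
  constructor <;> intro h p <;> [rw [← hset p]; rw [hset p]] <;> exact h p
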